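/- Let σ : ℝ → ℝ be continuous and suppose 0 < a < b satisfy a + σ(t a) = b + σ(t b) for all t ∈ [1,2]. Fix θ ∈ (0,1) and let F : ℝ → ℝ be the 1-periodic function equal to a on (k, k+θ) and b on (k+θ, k+1) for each integer k. Then the pair u(t,x) = t F(x), v(t,x) = ∫₀ˣ F(y) dy is a weak solution of the one-dimensional viscoelasticity system u_t = v_x, v_t = (σ(u) + v_x)_x on (1,2) × ℝ; in particular the flux σ(u) + u_t = σ(t F(x)) + F(x) is independent of x, equal to S(t) := a + σ(ta), for all t ∈ [1,2]. -/

import Mathlib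

open MeasureTheory Set Function

lemma aux13_deriv_zero {g g' : ℝ → ℝ} (hg : ∀ t, HasDerivAt g (g' t) t)
    {x : ℝ} (hx : x ∉ tsupport g) : g' x = 0 := by
  have h0 : g =ᶠ[nhds x] (fun _ => (0:ℝ)) := notMem_tsupport_iff_eventuallyEq.mp hx
  exact (hg x).unique ((hasDerivAt_const x (0:ℝ)).congr_of_eventuallyEq h0)

lemma aux13_exists_N {g : ℝ → ℝ} (hgs : HasCompactSupport g) :
    ∃ N : ℕ, 1 ≤ N ∧ ∀ x : ℝ, x ∉ Set.Ioo (-(N:ℝ)) N → x ∉ tsupport g := by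
  obtain ⟨R, hR⟩ := hgs.isBounded.subset_closedBall 0
  refine ⟨⌈R⌉₊ + 1, le_add_self.trans le_rfl |>.trans le_rfl |>.trans le_rfl, ?_⟩
  intro x hx hmem
  have h1 : |x| ≤ R := by simpa [Real.norm_eq_abs] using mem_closedBall_zero_iff.mp (hR hmem)
  have h2 : R < ((⌈R⌉₊ + 1 : ℕ) : ℝ) := by
    push_cast
    exact lt_of_le_of_lt (Nat.le_ceil R) (by linarith)
  exact hx (abs_lt.mp (lt_of_le_of_lt h1 h2))

lemma aux13_int_deriv_zero (g g' : ℝ → ℝ) (hg : ∀ t, HasDerivAt g (g' t) t)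
    (hg' : Continuous g') (hgs : HasCompactSupport g) : (∫ t : ℝ, g' t) = 0 := by
  obtain ⟨N, hN1, hN⟩ := aux13_exists_N hgs
  have hle : -(N:ℝ) ≤ N := neg_le_self (Nat.cast_nonneg N)
  have h1 : (∫ t in Set.Ioc (-(N:ℝ)) N, g' t) = ∫ t : ℝ, g' t :=
    setIntegral_eq_integral_of_forall_compl_eq_zero fun x hx =>
      aux13_deriv_zero hg (hN x (fun h => hx (Set.Ioo_subset_Ioc_self h)))
  have h2 : (∫ t in (-(N:ℝ))..N, g' t) = g N - g (-(N:ℝ)) :=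
    intervalIntegral.integral_eq_sub_of_hasDerivAt (fun t _ => hg t) (hg'.intervalIntegrable _ _)
  rw [intervalIntegral.integral_of_le hle] at h2
  have gz : ∀ x : ℝ, x ∉ Set.Ioo (-(N:ℝ)) N → g x = 0 := fun x hx =>
    image_eq_zero_of_notMem_tsupport (hN x hx)
  rw [← h1, h2, gz N (by simp), gz (-(N:ℝ)) (by simp), sub_zero]

lemma aux13_int_mul_deriv (g g' : ℝ → ℝ) (hg : ∀ t, HasDerivAt g (g' t) t)
    (hg' : Continuous g') (hgs : HasCompactSupport g) :
    (∫ t : ℝ, t * g' t) = - ∫ t : ℝ, g t := by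
  have hgc : Continuous g := by
    rw [continuous_iff_continuousAt]; exact fun t => (hg t).continuousAt
  have hG : ∀ t, HasDerivAt (fun s => s * g s) (g t + t * g' t) t := fun t => by
    have h := (hasDerivAt_id t).mul (hg t); simp only [id, one_mul] at h; exact h
  have hGs : HasCompactSupport (fun s => s * g s) :=
    hgs.mono' (fun s hs => subset_tsupport g (fun h0 => hs (by simp [h0])))
  have h0 := aux13_int_deriv_zero _ _ hG (hgc.add (continuous_id.mul hg')) hGs
  have hg'cs : HasCompactSupport (fun t => t * g' t) :=
    hgs.mono' (fun s hs => by
      by_contra h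
      have : g' s = 0 := aux13_deriv_zero hg h
      exact hs (by simp [this]))
  have hi1 : Integrable g := hgc.integrable_of_hasCompactSupport hgs
  have hi2 : Integrable (fun t => t * g' t) :=
    (continuous_id.mul hg').integrable_of_hasCompactSupport hg'cs
  rw [integral_add hi1 hi2] at h0
  linarith

lemma aux13_Fii {F : ℝ → ℝ} (hFmeas : Measurable F) {M : ℝ} (hM : ∀ x, |F x| ≤ M) :
    ∀ u v : ℝ, IntervalIntegrable F volume u v := by
  intro u v
  rw [intervalIntegrable_iff]
  exact Measure.integrableOn_of_bounded measure_Ioc_lt_top.ne hFmeas.aestronglyMeasurable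
    (ae_of_all _ fun x => by simpa [Real.norm_eq_abs] using hM x)

lemma aux13_bdd_integrable {f : ℝ → ℝ} (hf : Measurable f) {M : ℝ} (hM : ∀ x, |f x| ≤ M) :
    ∀ u v : ℝ, IntervalIntegrable f volume u v := aux13_Fii hf hM

lemma aux13_parts (a b θ : ℝ) (ha : 0 < a) (hab : a < b) (hθ : θ ∈ Set.Ioo (0:ℝ) 1)
    (F : ℝ → ℝ) (hFmeas : Measurable F) (hFab : ∀ x, F x = a ∨ F x = b)
    (hFa : ∀ k : ℤ, ∀ x ∈ Set.Ioo (k:ℝ) (k+θ), F x = a)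
    (hFb : ∀ k : ℤ, ∀ x ∈ Set.Ioo ((k:ℝ)+θ) (k+1), F x = b)
    (g g' : ℝ → ℝ) (hg : ∀ t, HasDerivAt g (g' t) t) (hg' : Continuous g')
    (hgs : HasCompactSupport g) :
    (∫ x : ℝ, (∫ y in (0:ℝ)..x, F y) * g' x) = - ∫ x : ℝ, F x * g x := by
  have hb : 0 < b := ha.trans hab
  have hFbd : ∀ x, |F x| ≤ b := fun x => by
    rcases hFab x with h | h <;> rw [h, abs_of_pos (by linarith)] <;> linarith
  have hFi : ∀ u v : ℝ, IntervalIntegrable F volume u v := aux13_Fii hFmeas hFbd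
  have hgc : Continuous g := by
    rw [continuous_iff_continuousAt]; exact fun t => (hg t).continuousAt
  set V : ℝ → ℝ := fun x => ∫ y in (0:ℝ)..x, F y with hVdef
  have hVc : Continuous V := intervalIntegral.continuous_primitive hFi 0
  have hVd : ∀ x : ℝ, ContinuousAt F x → HasDerivAt V (F x) x := fun x hx =>
    intervalIntegral.integral_hasDerivAt_right (hFi 0 x)
      hFmeas.stronglyMeasurable.stronglyMeasurableAtFilter hx
  -- interval integrability of W
  obtain ⟨Cg, hCg⟩ := hgs.exists_bound_of_continuous hgc
  have hFgbd : ∀ x, |F x * g x| ≤ b * |Cg| := by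
    intro x
    rw [abs_mul]
    have h1 := hFbd x
    have h2 : |g x| ≤ |Cg| := le_trans (by simpa [Real.norm_eq_abs] using hCg x) (le_abs_self _)
    exact mul_le_mul h1 h2 (abs_nonneg _) hb.le
  have hFg : ∀ u v : ℝ, IntervalIntegrable (fun x => F x * g x) volume u v :=
    aux13_bdd_integrable (hFmeas.mul hgc.measurable) hFgbd
  have hW : ∀ u v : ℝ, IntervalIntegrable (fun x => F x * g x + V x * g' x) volume u v :=
    fun u v => (hFg u v).add ((hVc.mul hg').intervalIntegrable u v)
  have hconth : Continuous (fun x => V x * g x) := hVc.mul hgc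
  -- FTC on pieces
  have hpiece : ∀ u v : ℝ, u ≤ v → (∀ x ∈ Set.Ioo u v, ContinuousAt F x) →
      (∫ x in u..v, (F x * g x + V x * g' x)) = V v * g v - V u * g u := by
    intro u v huv hcont
    exact intervalIntegral.integral_eq_sub_of_hasDeriv_right_of_le huv hconth.continuousOn
      (fun x hx => ((hVd x (hcont x hx)).mul (hg x)).hasDerivWithinAt) (hW u v)
  have hca : ∀ (k : ℤ), ∀ x ∈ Set.Ioo (k:ℝ) ((k:ℝ)+θ), ContinuousAt F x := by
    intro k x hx
    exact continuousAt_const.congr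
      (Filter.eventuallyEq_of_mem (isOpen_Ioo.mem_nhds hx) (fun y hy => hFa k y hy)).symm
  have hcb : ∀ (k : ℤ), ∀ x ∈ Set.Ioo ((k:ℝ)+θ) ((k:ℝ)+1), ContinuousAt F x := by
    intro k x hx
    exact continuousAt_const.congr
      (Filter.eventuallyEq_of_mem (isOpen_Ioo.mem_nhds hx) (fun y hy => hFb k y hy)).symm
  have hunit : ∀ k : ℤ, (∫ x in (k:ℝ)..((k:ℝ)+1), (F x * g x + V x * g' x))
      = V ((k:ℝ)+1) * g ((k:ℝ)+1) - V k * g k := by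
    intro k
    have h1 := hpiece (k:ℝ) ((k:ℝ)+θ) (by linarith [hθ.1]) (hca k)
    have h2 := hpiece ((k:ℝ)+θ) ((k:ℝ)+1) (by linarith [hθ.2]) (hcb k)
    have h3 := intervalIntegral.integral_add_adjacent_intervals
      (hW (k:ℝ) ((k:ℝ)+θ)) (hW ((k:ℝ)+θ) ((k:ℝ)+1))
    rw [h1, h2] at h3
    linarith
  obtain ⟨N, hN1, hN⟩ := aux13_exists_N hgs
  have hind : ∀ n : ℕ, (∫ x in (-(N:ℝ))..(-(N:ℝ)+n), (F x * g x + V x * g' x))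
      = V (-(N:ℝ)+n) * g (-(N:ℝ)+n) - V (-(N:ℝ)) * g (-(N:ℝ)) := by
    intro n
    induction n with
    | zero => simp
    | succ n ih =>
      have hk := hunit (-(N:ℤ)+n)
      have hcast : ((-(N:ℤ)+n : ℤ) : ℝ) = -(N:ℝ)+n := by push_cast; ring
      rw [hcast] at hk
      have h3 := intervalIntegral.integral_add_adjacent_intervals
        (hW (-(N:ℝ)) (-(N:ℝ)+n)) (hW (-(N:ℝ)+n) (-(N:ℝ)+n+1))
      have hc2 : (-(N:ℝ)+((n:ℕ)+1:ℕ)) = -(N:ℝ)+n+1 := by push_cast; ring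
      rw [hc2, ← h3, ih, hk]
      ring
  have hgz : ∀ x : ℝ, x ∉ Set.Ioo (-(N:ℝ)) N → g x = 0 := fun x hx =>
    image_eq_zero_of_notMem_tsupport (hN x hx)
  have hfin : (∫ x in (-(N:ℝ))..(N:ℝ), (F x * g x + V x * g' x)) = 0 := by
    have h2N := hind (2*N)
    have hcast : (-(N:ℝ)+((2*N : ℕ):ℝ)) = (N:ℝ) := by push_cast; ring
    rw [hcast] at h2N
    rw [h2N, hgz N (by simp), hgz (-(N:ℝ)) (by simp)]
    ring
  have hsplit := intervalIntegral.integral_add (f := fun x => F x * g x) (g := fun x => V x * g' x) (hFg (-(N:ℝ)) N)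
    ((hVc.mul hg').intervalIntegrable (-(N:ℝ)) N)
  rw [hsplit] at hfin
  have hle : -(N:ℝ) ≤ N := neg_le_self (Nat.cast_nonneg N)
  have e1 : (∫ x in (-(N:ℝ))..N, V x * g' x) = ∫ x : ℝ, V x * g' x := by
    rw [intervalIntegral.integral_of_le hle]
    refine setIntegral_eq_integral_of_forall_compl_eq_zero fun x hx => ?_
    have hxt : x ∉ tsupport g := hN x (fun h => hx (Set.Ioo_subset_Ioc_self h))
    rw [aux13_deriv_zero hg hxt, mul_zero]
  have e2 : (∫ x in (-(N:ℝ))..N, F x * g x) = ∫ x : ℝ, F x * g x := by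
    rw [intervalIntegral.integral_of_le hle]
    refine setIntegral_eq_integral_of_forall_compl_eq_zero fun x hx => ?_
    rw [image_eq_zero_of_notMem_tsupport (hN x (fun h => hx (Set.Ioo_subset_Ioc_self h))), mul_zero]
  rw [e1, e2] at hfin
  linarith

lemma aux13_integrable2 {G : ℝ × ℝ → ℝ} (hG : AEStronglyMeasurable G volume)
    {K : Set (ℝ × ℝ)} (hK : IsCompact K) (h0 : ∀ p ∉ K, G p = 0)
    {C : ℝ} (hbd : ∀ p ∈ K, |G p| ≤ C) : Integrable G := by
  have hsupp : support G ⊆ K := fun p hp => by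
    by_contra h; exact hp (h0 p h)
  rw [← integrableOn_iff_integrable_of_support_subset hsupp]
  refine Measure.integrableOn_of_bounded (M := C) hK.measure_lt_top.ne hG ?_
  rw [ae_restrict_iff' hK.measurableSet]
  exact ae_of_all _ fun p hp => by simpa [Real.norm_eq_abs] using hbd p hp

lemma aux13_fub1 (G : ℝ → ℝ → ℝ) (hG : Integrable (fun p : ℝ × ℝ => G p.1 p.2)) :
    (∫ p : ℝ × ℝ, G p.1 p.2) = ∫ t : ℝ, ∫ x : ℝ, G t x := by
  rw [Measure.volume_eq_prod] at hG ⊢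
  exact integral_prod _ hG

lemma aux13_fub2 (G : ℝ → ℝ → ℝ) (hG : Integrable (fun p : ℝ × ℝ => G p.1 p.2)) :
    (∫ p : ℝ × ℝ, G p.1 p.2) = ∫ x : ℝ, ∫ t : ℝ, G t x := by
  rw [Measure.volume_eq_prod] at hG ⊢
  exact integral_prod_symm _ hG

/-- The oscillatory pair `u(t,x) = t F(x)`, `v(t,x) = ∫₀ˣ F(y) dy`, built from a
periodic two-valued step strain `F` whose values `a, b` satisfy the matching condition
`a + σ(ta) = b + σ(tb)` for `t ∈ [1,2]`, is a weak solution of the 1D viscoelasticity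
system `u_t = v_x`, `v_t = (σ(u) + v_x)_x` on `(1,2) × ℝ`; in particular the flux
`σ(u) + u_t = σ(t F(x)) + F(x)` equals `S(t) = a + σ(ta)`, independent of `x`. -/
theorem stmt13 (σ : ℝ → ℝ) (hσ : Continuous σ) (a b θ : ℝ)
    (ha : 0 < a) (hab : a < b) (hθ : θ ∈ Set.Ioo (0 : ℝ) 1)
    (hmatch : ∀ t ∈ Set.Icc (1 : ℝ) 2, a + σ (t * a) = b + σ (t * b))
    (F : ℝ → ℝ) (hFmeas : Measurable F)
    (hFab : ∀ x : ℝ, F x = a ∨ F x = b)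
    (hFa : ∀ k : ℤ, ∀ x ∈ Set.Ioo (k : ℝ) (k + θ), F x = a)
    (hFb : ∀ k : ℤ, ∀ x ∈ Set.Ioo ((k : ℝ) + θ) (k + 1), F x = b) :
    (∀ t ∈ Set.Icc (1 : ℝ) 2, ∀ x : ℝ, σ (t * F x) + F x = a + σ (t * a)) ∧
    (∀ φ : ℝ × ℝ → ℝ, ContDiff ℝ 1 φ → HasCompactSupport φ →
      Function.support φ ⊆ Set.Ioo (1 : ℝ) 2 ×ˢ (Set.univ : Set ℝ) →
      (∫ p : ℝ × ℝ,
          ((p.1 * F p.2) * fderiv ℝ φ p ((1 : ℝ), (0 : ℝ)) -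
            (∫ y in (0 : ℝ)..p.2, F y) * fderiv ℝ φ p ((0 : ℝ), (1 : ℝ)))) = 0 ∧
      (∫ p : ℝ × ℝ,
          ((∫ y in (0 : ℝ)..p.2, F y) * fderiv ℝ φ p ((1 : ℝ), (0 : ℝ)) -
            (σ (p.1 * F p.2) + F p.2) * fderiv ℝ φ p ((0 : ℝ), (1 : ℝ)))) = 0) := by
  have hb : 0 < b := ha.trans hab
  have hFbd : ∀ x, |F x| ≤ b := fun x => by
    rcases hFab x with h | h <;> rw [h, abs_of_pos (by linarith)] <;> linarith
  have part1 : ∀ t ∈ Set.Icc (1 : ℝ) 2, ∀ x : ℝ, σ (t * F x) + F x = a + σ (t * a) := by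
    intro t ht x
    rcases hFab x with h | h
    · rw [h]; ring
    · rw [h]; linarith [hmatch t ht]
  refine ⟨part1, ?_⟩
  intro φ hφ1 hφs hφsupp
  have hφc : Continuous φ := hφ1.continuous
  have hfd : Continuous (fun p => fderiv ℝ φ p) := hφ1.continuous_fderiv one_ne_zero
  have hD1c : Continuous (fun p : ℝ × ℝ => fderiv ℝ φ p ((1:ℝ), (0:ℝ))) :=
    hfd.clm_apply continuous_const
  have hD2c : Continuous (fun p : ℝ × ℝ => fderiv ℝ φ p ((0:ℝ), (1:ℝ))) :=
    hfd.clm_apply continuous_const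
  have hK : IsCompact (tsupport φ) := hφs
  -- radius bound
  obtain ⟨R0, hR0⟩ := hK.isBounded.subset_closedBall 0
  set R : ℝ := max R0 0 with hRdef
  have hR : tsupport φ ⊆ Metric.closedBall 0 R :=
    hR0.trans (Metric.closedBall_subset_closedBall (le_max_left _ _))
  have hRnn : 0 ≤ R := le_max_right _ _
  have hfst : ∀ p ∈ tsupport φ, |p.1| ≤ R := by
    intro p hp
    have h1 : ‖p‖ ≤ R := by simpa using mem_closedBall_zero_iff.mp (hR hp)
    exact le_trans (by simpa [Real.norm_eq_abs] using norm_fst_le p) h1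
  obtain ⟨C1, hC1⟩ := hK.exists_bound_of_continuousOn hD1c.continuousOn
  obtain ⟨C2, hC2⟩ := hK.exists_bound_of_continuousOn hD2c.continuousOn
  obtain ⟨Cφ, hCφ⟩ := hK.exists_bound_of_continuousOn hφc.continuousOn
  obtain ⟨Cσ, hCσ⟩ :=
    (isCompact_Icc (a := -(R*b)) (b := R*b)).exists_bound_of_continuousOn hσ.continuousOn
  -- vanishing off the support
  have hφz : ∀ p ∉ tsupport φ, φ p = 0 := fun p hp => image_eq_zero_of_notMem_tsupport hp
  have hfd0 : ∀ p ∉ tsupport φ, fderiv ℝ φ p = 0 := by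
    intro p hp
    rw [notMem_tsupport_iff_eventuallyEq] at hp
    rw [hp.fderiv_eq]
    exact fderiv_const_apply 0
  have hφ0 : ∀ t x : ℝ, t ∉ Set.Ioo (1:ℝ) 2 → φ (t, x) = 0 := by
    intro t x ht
    by_contra h
    exact ht (hφsupp (Function.mem_support.mpr h)).1
  -- slice derivatives
  have hsl1 : ∀ x t : ℝ, HasDerivAt (fun s => φ (s, x)) (fderiv ℝ φ (t, x) ((1:ℝ), (0:ℝ))) t := by
    intro x t
    have h1 : HasDerivAt (fun s : ℝ => (s, x)) ((1:ℝ), (0:ℝ)) t :=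
      (hasDerivAt_id t).prodMk (hasDerivAt_const t x)
    exact (hφ1.differentiable one_ne_zero (t, x)).hasFDerivAt.comp_hasDerivAt t h1
  have hsl2 : ∀ t x : ℝ, HasDerivAt (fun y => φ (t, y)) (fderiv ℝ φ (t, x) ((0:ℝ), (1:ℝ))) x := by
    intro t x
    have h1 : HasDerivAt (fun y : ℝ => (t, y)) ((0:ℝ), (1:ℝ)) x :=
      (hasDerivAt_const x t).prodMk (hasDerivAt_id x)
    exact (hφ1.differentiable one_ne_zero (t, x)).hasFDerivAt.comp_hasDerivAt x h1
  have hcs1 : ∀ x : ℝ, HasCompactSupport (fun s => φ (s, x)) := fun x =>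
    HasCompactSupport.intro isCompact_Icc
      (fun s hs => hφ0 s x (fun h => hs (Set.Ioo_subset_Icc_self h)))
  have hcs2 : ∀ t : ℝ, HasCompactSupport (fun y => φ (t, y)) := by
    intro t
    refine HasCompactSupport.intro (hK.image continuous_snd) (fun y hy => ?_)
    by_contra h
    exact hy ⟨(t, y), subset_tsupport φ (Function.mem_support.mpr h), rfl⟩
  have hD2z : ∀ t : ℝ, t ∉ Set.Icc (1:ℝ) 2 → ∀ x : ℝ, fderiv ℝ φ (t, x) ((0:ℝ), (1:ℝ)) = 0 := by
    intro t ht x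
    have hzero : (fun y => φ (t, y)) = (fun _ : ℝ => (0:ℝ)) :=
      funext fun y => hφ0 t y (fun h => ht (Set.Ioo_subset_Icc_self h))
    have h2 := hsl2 t x
    rw [hzero] at h2
    exact h2.unique (hasDerivAt_const x 0)
  -- continuity of slice derivatives
  have hD1sl : ∀ x : ℝ, Continuous (fun s : ℝ => fderiv ℝ φ (s, x) ((1:ℝ), (0:ℝ))) := fun x =>
    hD1c.comp (continuous_id.prodMk continuous_const)
  have hD2sl : ∀ t : ℝ, Continuous (fun y : ℝ => fderiv ℝ φ (t, y) ((0:ℝ), (1:ℝ))) := fun t =>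
    hD2c.comp (continuous_const.prodMk continuous_id)
  -- primitive
  have hFi : ∀ u v : ℝ, IntervalIntegrable F volume u v := aux13_Fii hFmeas hFbd
  set V : ℝ → ℝ := fun x => ∫ y in (0:ℝ)..x, F y with hVdef
  have hVc : Continuous V := intervalIntegral.continuous_primitive hFi 0
  -- integrability facts
  have int1 : Integrable (fun p : ℝ × ℝ => (p.1 * F p.2) * fderiv ℝ φ p ((1:ℝ), (0:ℝ))) := by
    refine aux13_integrable2
      (((measurable_fst.mul (hFmeas.comp measurable_snd)).mul hD1c.measurable).aestronglyMeasurable)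
      hK (fun p hp => by rw [hfd0 p hp]; simp) (C := R * b * C1) ?_
    intro p hp
    rw [abs_mul, abs_mul]
    have h1 := hfst p hp
    have h2 := hFbd p.2
    have h3 : |fderiv ℝ φ p ((1:ℝ), (0:ℝ))| ≤ C1 := by
      simpa [Real.norm_eq_abs] using hC1 p hp
    have hC1nn : (0:ℝ) ≤ C1 := le_trans (abs_nonneg _) h3
    exact mul_le_mul (mul_le_mul h1 h2 (abs_nonneg _) hRnn) h3 (abs_nonneg _)
      (by positivity)
  have int2 : Integrable (fun p : ℝ × ℝ => V p.2 * fderiv ℝ φ p ((0:ℝ), (1:ℝ))) := by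
    refine Continuous.integrable_of_hasCompactSupport ((hVc.comp continuous_snd).mul hD2c) ?_
    exact HasCompactSupport.intro hK (fun p hp => by rw [hfd0 p hp]; simp)
  have int2' : Integrable (fun p : ℝ × ℝ => V p.2 * fderiv ℝ φ p ((1:ℝ), (0:ℝ))) := by
    refine Continuous.integrable_of_hasCompactSupport ((hVc.comp continuous_snd).mul hD1c) ?_
    exact HasCompactSupport.intro hK (fun p hp => by rw [hfd0 p hp]; simp)
  have int3 : Integrable (fun p : ℝ × ℝ => F p.2 * φ p) := by
    refine aux13_integrable2
      (((hFmeas.comp measurable_snd).mul hφc.measurable).aestronglyMeasurable)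
      hK (fun p hp => by rw [hφz p hp]; simp) (C := b * Cφ) ?_
    intro p hp
    rw [abs_mul]
    have h2 : |φ p| ≤ Cφ := by simpa [Real.norm_eq_abs] using hCφ p hp
    exact mul_le_mul (hFbd p.2) h2 (abs_nonneg _) hb.le
  have int4 : Integrable
      (fun p : ℝ × ℝ => (σ (p.1 * F p.2) + F p.2) * fderiv ℝ φ p ((0:ℝ), (1:ℝ))) := by
    refine aux13_integrable2
      ((((hσ.measurable.comp (measurable_fst.mul (hFmeas.comp measurable_snd))).add
        (hFmeas.comp measurable_snd)).mul hD2c.measurable).aestronglyMeasurable)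
      hK (fun p hp => by rw [hfd0 p hp]; simp) (C := (Cσ + b) * C2) ?_
    intro p hp
    rw [abs_mul]
    have harg : p.1 * F p.2 ∈ Set.Icc (-(R*b)) (R*b) := by
      have : |p.1 * F p.2| ≤ R * b := by
        rw [abs_mul]
        exact mul_le_mul (hfst p hp) (hFbd p.2) (abs_nonneg _) hRnn
      exact ⟨neg_le_of_abs_le this, le_of_abs_le this⟩
    have h1 : |σ (p.1 * F p.2)| ≤ Cσ := by simpa [Real.norm_eq_abs] using hCσ _ harg
    have h2 : |σ (p.1 * F p.2) + F p.2| ≤ Cσ + b :=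
      le_trans (abs_add_le _ _) (add_le_add h1 (hFbd p.2))
    have h3 : |fderiv ℝ φ p ((0:ℝ), (1:ℝ))| ≤ C2 := by
      simpa [Real.norm_eq_abs] using hC2 p hp
    exact mul_le_mul h2 h3 (abs_nonneg _) (le_trans (abs_nonneg _) h2)
  constructor
  · -- first weak equation
    rw [integral_sub int1 int2]
    have hA : (∫ p : ℝ × ℝ, (p.1 * F p.2) * fderiv ℝ φ p ((1:ℝ), (0:ℝ)))
        = - ∫ p : ℝ × ℝ, F p.2 * φ p := by
      have e1 : (∫ p : ℝ × ℝ, (p.1 * F p.2) * fderiv ℝ φ p ((1:ℝ), (0:ℝ)))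
          = ∫ x : ℝ, ∫ t : ℝ, (t * F x) * fderiv ℝ φ (t, x) ((1:ℝ), (0:ℝ)) :=
        aux13_fub2 (fun t x => (t * F x) * fderiv ℝ φ (t, x) ((1:ℝ), (0:ℝ))) int1
      have e2 : ∀ x : ℝ, (∫ t : ℝ, (t * F x) * fderiv ℝ φ (t, x) ((1:ℝ), (0:ℝ)))
          = - ∫ t : ℝ, F x * φ (t, x) := by
        intro x
        have h1 : ∀ t : ℝ, (t * F x) * fderiv ℝ φ (t, x) ((1:ℝ), (0:ℝ))
            = F x * (t * fderiv ℝ φ (t, x) ((1:ℝ), (0:ℝ))) := fun t => by ring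
        simp only [h1]
        rw [integral_const_mul, aux13_int_mul_deriv _ _ (hsl1 x) (hD1sl x) (hcs1 x),
          mul_neg, ← integral_const_mul]
      have e3 : (∫ p : ℝ × ℝ, F p.2 * φ p)
          = ∫ x : ℝ, ∫ t : ℝ, F x * φ (t, x) :=
        aux13_fub2 (fun t x => F x * φ (t, x)) int3
      rw [e1, e3, ← integral_neg]
      exact integral_congr_ae (Filter.Eventually.of_forall fun x => e2 x)
    have hB : (∫ p : ℝ × ℝ, V p.2 * fderiv ℝ φ p ((0:ℝ), (1:ℝ)))
        = - ∫ p : ℝ × ℝ, F p.2 * φ p := by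
      have e1 : (∫ p : ℝ × ℝ, V p.2 * fderiv ℝ φ p ((0:ℝ), (1:ℝ)))
          = ∫ t : ℝ, ∫ x : ℝ, V x * fderiv ℝ φ (t, x) ((0:ℝ), (1:ℝ)) :=
        aux13_fub1 (fun t x => V x * fderiv ℝ φ (t, x) ((0:ℝ), (1:ℝ))) int2
      have e2 : ∀ t : ℝ, (∫ x : ℝ, V x * fderiv ℝ φ (t, x) ((0:ℝ), (1:ℝ)))
          = - ∫ x : ℝ, F x * φ (t, x) := fun t =>
        aux13_parts a b θ ha hab hθ F hFmeas hFab hFa hFb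
          (fun y => φ (t, y)) (fun y => fderiv ℝ φ (t, y) ((0:ℝ), (1:ℝ)))
          (hsl2 t) (hD2sl t) (hcs2 t)
      have e3 : (∫ p : ℝ × ℝ, F p.2 * φ p)
          = ∫ t : ℝ, ∫ x : ℝ, F x * φ (t, x) :=
        aux13_fub1 (fun t x => F x * φ (t, x)) int3
      rw [e1, e3, ← integral_neg]
      exact integral_congr_ae (Filter.Eventually.of_forall fun t => e2 t)
    rw [hA, hB, sub_self]
  · -- second weak equation
    rw [integral_sub int2' int4]
    have hA : (∫ p : ℝ × ℝ, V p.2 * fderiv ℝ φ p ((1:ℝ), (0:ℝ))) = 0 := by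
      have e1 : (∫ p : ℝ × ℝ, V p.2 * fderiv ℝ φ p ((1:ℝ), (0:ℝ)))
          = ∫ x : ℝ, ∫ t : ℝ, V x * fderiv ℝ φ (t, x) ((1:ℝ), (0:ℝ)) :=
        aux13_fub2 (fun t x => V x * fderiv ℝ φ (t, x) ((1:ℝ), (0:ℝ))) int2'
      rw [e1]
      have e2 : ∀ x : ℝ, (∫ t : ℝ, V x * fderiv ℝ φ (t, x) ((1:ℝ), (0:ℝ))) = 0 := by
        intro x
        rw [integral_const_mul, aux13_int_deriv_zero _ _ (hsl1 x) (hD1sl x) (hcs1 x), mul_zero]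
      rw [integral_congr_ae (Filter.Eventually.of_forall e2), integral_zero]
    have hB : (∫ p : ℝ × ℝ, (σ (p.1 * F p.2) + F p.2) * fderiv ℝ φ p ((0:ℝ), (1:ℝ))) = 0 := by
      have e1 : (∫ p : ℝ × ℝ, (σ (p.1 * F p.2) + F p.2) * fderiv ℝ φ p ((0:ℝ), (1:ℝ)))
          = ∫ t : ℝ, ∫ x : ℝ, (σ (t * F x) + F x) * fderiv ℝ φ (t, x) ((0:ℝ), (1:ℝ)) :=
        aux13_fub1 (fun t x => (σ (t * F x) + F x) * fderiv ℝ φ (t, x) ((0:ℝ), (1:ℝ))) int4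
      rw [e1]
      have e2 : ∀ t : ℝ, (∫ x : ℝ, (σ (t * F x) + F x) * fderiv ℝ φ (t, x) ((0:ℝ), (1:ℝ))) = 0 := by
        intro t
        by_cases ht : t ∈ Set.Icc (1:ℝ) 2
        · have h1 : ∀ x : ℝ, (σ (t * F x) + F x) * fderiv ℝ φ (t, x) ((0:ℝ), (1:ℝ))
              = (a + σ (t * a)) * fderiv ℝ φ (t, x) ((0:ℝ), (1:ℝ)) := fun x => by
            rw [part1 t ht x]
          simp only [h1]
          rw [integral_const_mul, aux13_int_deriv_zero _ _ (hsl2 t) (hD2sl t) (hcs2 t), mul_zero]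
        · have h1 : ∀ x : ℝ, (σ (t * F x) + F x) * fderiv ℝ φ (t, x) ((0:ℝ), (1:ℝ)) = 0 :=
            fun x => by rw [hD2z t ht x, mul_zero]
          simp only [h1, integral_zero]
      rw [integral_congr_ae (Filter.Eventually.of_forall e2), integral_zero]
    rw [hA, hB, sub_self]
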